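/- For every k ≥ 1, the Ambainis–Sun function g_0 on 2k variables satisfies C_1(g_0) = ⌊3k/2⌋ + 1: every 1-input satisfies exactly one certificate c_i, each c_i assigns exactly ⌊3k/2⌋+1 variables, and no smaller 1-certificate exists for any 1-input. -/

import Mathlib

open Finset

section Defs

variable {I : Type*} [Fintype I] [DecidableEq I]

/-- Flip a single bit of the input. -/
def flipBit (x : I → Bool) (i : I) : I → Bool := Function.update x i (!(x i))

/-- Flip a block of bits of the input. -/
def flipSet (x : I → Bool) (B : Finset I) : I → Bool := fun j => if j ∈ B then !(x j) else x j

/-- Sensitivity of `f` at input `x`. -/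
def sens (f : (I → Bool) → Bool) (x : I → Bool) : ℕ :=
  (univ.filter fun i => f (flipBit x i) ≠ f x).card

/-- Maximum sensitivity over 0-inputs. -/
noncomputable def s0 (f : (I → Bool) → Bool) : ℕ :=
  (univ.filter fun x => f x = false).sup (sens f)

/-- Maximum sensitivity over 1-inputs. -/
noncomputable def s1 (f : (I → Bool) → Bool) : ℕ :=
  (univ.filter fun x => f x = true).sup (sens f)

/-- There exist `b` pairwise disjoint sensitive blocks for `f` at `x`. -/
def hasBS (f : (I → Bool) → Bool) (x : I → Bool) (b : ℕ) : Prop :=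
  ∃ B : Fin b → Finset I, (∀ i j, i ≠ j → Disjoint (B i) (B j)) ∧
    ∀ i, f (flipSet x (B i)) ≠ f x

/-- Block sensitivity of `f` at `x`. -/
noncomputable def bs (f : (I → Bool) → Bool) (x : I → Bool) : ℕ := sSup {b | hasBS f x b}

/-- Maximum block sensitivity over 0-inputs. -/
noncomputable def bs0 (f : (I → Bool) → Bool) : ℕ :=
  (univ.filter fun x => f x = false).sup (bs f)

/-- `y` agrees with `x` on the set `S`. -/
def agreesOn (S : Finset I) (x y : I → Bool) : Prop := ∀ i ∈ S, y i = x i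

/-- The restriction of `x` to `S` forces the value `v`. -/
def IsCertOn (f : (I → Bool) → Bool) (S : Finset I) (x : I → Bool) (v : Bool) : Prop :=
  ∀ y, agreesOn S x y → f y = v

/-- Minimum size of a certificate of `f` at `x` (for the value `f x`). -/
noncomputable def certSize (f : (I → Bool) → Bool) (x : I → Bool) : ℕ :=
  sInf {m | ∃ S : Finset I, S.card = m ∧ IsCertOn f S x (f x)}

/-- Maximum certificate complexity over 1-inputs. -/
noncomputable def C1 (f : (I → Bool) → Bool) : ℕ :=
  (univ.filter fun x => f x = true).sup (certSize f)

/-- `x` satisfies the partial assignment `c`. -/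
def PAsat (c : I → Option Bool) (x : I → Bool) : Prop := ∀ i b, c i = some b → x i = b

/-- The partial assignment `c` is a 1-certificate of `f`. -/
def IsOneCert (f : (I → Bool) → Bool) (c : I → Option Bool) : Prop :=
  ∀ x, PAsat c x → f x = true

/-- The partial assignment `c` is a minimal 1-certificate of `f`. -/
def IsMinOneCert (f : (I → Bool) → Bool) (c : I → Option Bool) : Prop :=
  IsOneCert f c ∧ ∀ i, c i ≠ none → ¬ IsOneCert f (Function.update c i none)

/-- Number of positions assigned by a partial assignment. -/
def PAsize (c : I → Option Bool) : ℕ := (univ.filter fun i => c i ≠ none).card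

/-- Two partial assignments overlap: some position is assigned the same value by both. -/
def Overlap (c d : I → Option Bool) : Prop := ∃ i b, c i = some b ∧ d i = some b

/-- Number of contradictions between two partial assignments. -/
def contra (c d : I → Option Bool) : ℕ :=
  (univ.filter fun i =>
    (c i = some true ∧ d i = some false) ∨ (c i = some false ∧ d i = some true)).card

end Defs

/-- Total weight of the induced subgraph on `A` (each unordered edge counted once). -/
def gweight {V : Type*} [DecidableEq V] (w : V → V → ℕ) (A : Finset V) : ℚ :=
  (∑ p ∈ A.offDiag, (w p.1 p.2 : ℚ)) / 2

/-- The index `j` lies in `{i+1, …, i+⌊k/2⌋}` taken modulo `k`. -/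
def ASrange (k : ℕ) (i j : Fin k) : Prop :=
  (j : ℕ) ∈ (Finset.Icc 1 (k / 2)).image (fun d => ((i : ℕ) + d) % k)

instance (k : ℕ) (i j : Fin k) : Decidable (ASrange k i j) := by
  unfold ASrange; infer_instance

/-- The Ambainis–Sun certificate `c_i` on variables indexed by `Fin k × Fin 2`,
where `(j, 0)` stands for `x_{2j+1}` and `(j, 1)` stands for `x_{2j+2}`:
it requires `x_{2i+1} = x_{2i+2} = 1`, `x_{2j+1} = 0` for `j ≠ i`, and
`x_{2j+2} = 0` for `j ∈ {i+1, …, i+⌊k/2⌋}` (mod `k`). -/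
def ASCert (k : ℕ) (i : Fin k) (p : Fin k × Fin 2) : Option Bool :=
  if p.2 = 0 then (if p.1 = i then some true else some false)
  else if p.1 = i then some true
  else if ASrange k i p.1 then some false
  else none

instance {I : Type*} [Fintype I] [DecidableEq I] (c : I → Option Bool) (x : I → Bool) :
    Decidable (PAsat c x) := by
  unfold PAsat; infer_instance

/-- The Ambainis–Sun function on `2k` variables: `1` iff the input satisfies some `c_i`. -/
def ASfun (k : ℕ) (x : Fin k × Fin 2 → Bool) : Bool :=
  decide (∃ i : Fin k, PAsat (ASCert k i) x)


section AuxAS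

open Finset

/-- Support of the Ambainis–Sun certificate `c_i`. -/
def ASsupp (k : ℕ) (i : Fin k) : Finset (Fin k × Fin 2) :=
  univ.filter fun p => ASCert k i p ≠ none

lemma mem_ASsupp {k : ℕ} {i : Fin k} {p : Fin k × Fin 2} :
    p ∈ ASsupp k i ↔ ASCert k i p ≠ none := by simp [ASsupp]

lemma ASrange_ne {k : ℕ} {i j : Fin k} (h : ASrange k i j) : j ≠ i := by
  rcases Finset.mem_image.mp h with ⟨d, hd, hdj⟩
  simp only [Finset.mem_Icc] at hd
  intro hji
  rw [hji] at hdj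
  have hik : (i : ℕ) < k := i.isLt
  have hdk : d < k :=
    lt_of_le_of_lt hd.2 (Nat.div_lt_self (lt_of_le_of_lt (Nat.zero_le _) hik) one_lt_two)
  have h1 : ((i : ℕ) + d) % k = ((i : ℕ) + 0) % k := by
    simpa [Nat.mod_eq_of_lt hik] using hdj
  have h2 : d % k = 0 % k := Nat.ModEq.add_left_cancel' (i : ℕ) h1
  rw [Nat.mod_eq_of_lt hdk, Nat.zero_mod] at h2
  omega

/-- The set of indices in the Ambainis–Sun range of `i`. -/
lemma card_ASrange {k : ℕ} (i : Fin k) :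
    (univ.filter fun j : Fin k => ASrange k i j).card = k / 2 := by
  have hik : (i : ℕ) < k := i.isLt
  have hpos : 0 < k := lt_of_le_of_lt (Nat.zero_le _) hik
  have hlt : ∀ m ∈ (Finset.Icc 1 (k / 2)).image (fun d => ((i : ℕ) + d) % k), m < k := by
    intro m hm
    rcases Finset.mem_image.mp hm with ⟨d, _, rfl⟩
    exact Nat.mod_lt _ hpos
  have hset : (univ.filter fun j : Fin k => ASrange k i j)
      = ((Finset.Icc 1 (k / 2)).image (fun d => ((i : ℕ) + d) % k)).attachFin hlt := by
    ext j
    simp only [Finset.mem_filter, Finset.mem_univ, true_and, Finset.mem_attachFin]; rfl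
  rw [hset, Finset.card_attachFin, Finset.card_image_of_injOn, Nat.card_Icc]
  · omega
  · intro d1 h1 d2 h2 heq
    simp only [Finset.coe_Icc, Set.mem_Icc] at h1 h2
    have hd1 : d1 < k := lt_of_le_of_lt h1.2 (Nat.div_lt_self hpos one_lt_two)
    have hd2 : d2 < k := lt_of_le_of_lt h2.2 (Nat.div_lt_self hpos one_lt_two)
    have hmod : d1 % k = d2 % k := Nat.ModEq.add_left_cancel' (i : ℕ) heq
    rwa [Nat.mod_eq_of_lt hd1, Nat.mod_eq_of_lt hd2] at hmod

lemma card_ASsupp {k : ℕ} (i : Fin k) : (ASsupp k i).card = 3 * k / 2 + 1 := by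
  have hik : (i : ℕ) < k := i.isLt
  have hset : ASsupp k i =
      (univ.map ⟨fun j : Fin k => (j, (0 : Fin 2)), fun a b h => by
        simpa using congrArg Prod.fst h⟩) ∪
      ((insert i (univ.filter fun j : Fin k => ASrange k i j)).map
        ⟨fun j : Fin k => (j, (1 : Fin 2)), fun a b h => by
          simpa using congrArg Prod.fst h⟩) := by
    ext ⟨j, b⟩
    fin_cases b <;> simp [mem_ASsupp, ASCert] <;> [skip; skip]
    · by_cases hji : j = i <;> simp [hji] <;> exact Or.inr (Or.inl ⟨_, rfl⟩)
    · by_cases hji : j = i <;> by_cases hr : ASrange k i j <;> simp [hji, hr] <;>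
      simp [DFunLike.coe, hji, hr] <;> exact fun x hx hxj => hr (hxj ▸ hx)
  rw [hset, Finset.card_union_of_disjoint, Finset.card_map, Finset.card_map,
    Finset.card_insert_of_notMem, card_ASrange]
  · simp only [Finset.card_univ, Fintype.card_fin]
    omega
  · simp only [Finset.mem_filter, Finset.mem_univ, true_and]
    intro h
    exact ASrange_ne h rfl
  · rw [Finset.disjoint_left]
    rintro ⟨j, b⟩ h1 h2
    simp only [Finset.mem_map, Function.Embedding.coeFn_mk, Prod.mk.injEq] at h1 h2
    rcases h1 with ⟨a, _, rfl, hb0⟩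
    rcases h2 with ⟨c, _, _, hb1⟩

lemma ASsupp_cert {k : ℕ} {i : Fin k} {x : Fin k × Fin 2 → Bool}
    (hx : PAsat (ASCert k i) x) : IsCertOn (ASfun k) (ASsupp k i) x true := by
  intro y hy
  have hsat : PAsat (ASCert k i) y := by
    intro p b hb
    rw [hy p (mem_ASsupp.mpr (by simp [hb]))]
    exact hx p b hb
  simp only [ASfun, decide_eq_true_eq]
  exact ⟨i, hsat⟩

lemma x0_sat {k : ℕ} (hk : 0 < k) :
    PAsat (ASCert k ⟨0, hk⟩) (fun q : Fin k × Fin 2 => decide (q.1 = ⟨0, hk⟩)) := by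
  rintro ⟨j, b⟩ v hv
  fin_cases b <;> simp only [ASCert] at hv <;> simp only []
  · by_cases hji : j = (⟨0, hk⟩ : Fin k) <;> simp [hji] at hv ⊢ <;> simp [hv.symm, hji]
  · by_cases hji : j = (⟨0, hk⟩ : Fin k)
    · simp [hji] at hv ⊢; simp [hv.symm]
    · by_cases hr : ASrange k (⟨0, hk⟩ : Fin k) j <;> simp [hji, hr] at hv
      simp [hji, ← hv]

lemma no_sat_flip {k : ℕ} (hk : 0 < k) (p : Fin k × Fin 2)
    (hp : ASCert k ⟨0, hk⟩ p ≠ none) (i : Fin k) :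
    ¬ PAsat (ASCert k i) (flipBit (fun q : Fin k × Fin 2 => decide (q.1 = ⟨0, hk⟩)) p) := by
  intro hsat
  set i0 : Fin k := ⟨0, hk⟩ with hi0
  set x0 : Fin k × Fin 2 → Bool := fun q => decide (q.1 = i0) with hx0
  set y := flipBit x0 p with hy
  have hyval : ∀ q, y q = if q = p then !(x0 q) else x0 q := by
    intro q
    simp only [hy, flipBit, Function.update]
    split <;> simp_all
  obtain ⟨j, b⟩ := p
  have htop : y (i, 0) = true := hsat (i, 0) true (by simp [ASCert])
  have hoff : ∀ j' : Fin k, j' ≠ i → y (j', 0) = false := by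
    intro j' hj'
    exact hsat (j', 0) false (by simp [ASCert, hj'])
  fin_cases b
  · -- flipped bit is (j, 0)
    by_cases hji0 : j = i0
    · subst hji0
      rw [hyval] at htop
      by_cases hii0 : i = i0 <;> simp [Prod.ext_iff, hii0, x0] at htop
    · -- j ≠ i0 : both (i0,0) and (j,0) are true in y
      have h1 : y (i0, 0) = true := by
        rw [hyval]; simp [Prod.ext_iff, Ne.symm hji0, x0]
      have h2 : y (j, 0) = true := by
        rw [hyval]; simp [Prod.ext_iff, x0, hji0]
      by_cases hii0 : i = i0
      · have := hoff j (by rw [hii0]; exact hji0)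
        rw [h2] at this; exact absurd this (by simp)
      · have := hoff i0 (fun h => hii0 h.symm)
        rw [h1] at this; exact absurd this (by simp)
  · -- flipped bit is (j, 1)
    have hcol0 : ∀ j' : Fin k, y (j', 0) = x0 (j', 0) := by
      intro j'
      rw [hyval]
      simp [Prod.ext_iff]
    have hii0 : i = i0 := by
      have := htop
      rw [hcol0] at this
      simpa [x0] using this
    subst hii0
    by_cases hji0 : j = i0
    · subst hji0
      have h1 : y (i0, 1) = true := hsat (i0, 1) true (by simp [ASCert])
      rw [hyval] at h1
      simp [x0] at h1
    · have hr : ASrange k i0 j := by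
        by_contra hcon
        apply hp
        simp [ASCert, hji0, hcon]
      have h1 : y (j, 1) = false := hsat (j, 1) false (by simp [ASCert, hji0, hr])
      rw [hyval] at h1
      simp [x0, hji0] at h1

end AuxAS

/-- For every `k ≥ 1`, the Ambainis–Sun function satisfies
`C_1(g_0) = ⌊3k/2⌋ + 1`. -/
theorem stmt_5 (k : ℕ) (hk : 1 ≤ k) : C1 (ASfun k) = 3 * k / 2 + 1 := by
  classical
  set f := ASfun k with hf
  set N := 3 * k / 2 + 1 with hN
  set i0 : Fin k := ⟨0, hk⟩ with hi0
  set x0 : Fin k × Fin 2 → Bool := fun q => decide (q.1 = i0) with hx0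
  have hx0sat : PAsat (ASCert k i0) x0 := x0_sat hk
  have hfx0 : f x0 = true := by
    simp only [hf, ASfun, decide_eq_true_eq]
    exact ⟨i0, hx0sat⟩
  apply le_antisymm
  · -- upper bound
    apply Finset.sup_le
    intro x hx
    have hfx : f x = true := (Finset.mem_filter.mp hx).2
    obtain ⟨i, hsat⟩ : ∃ i : Fin k, PAsat (ASCert k i) x := by
      simpa [hf, ASfun] using hfx
    apply Nat.sInf_le
    refine ⟨ASsupp k i, card_ASsupp i, ?_⟩
    rw [hfx]
    exact ASsupp_cert hsat
  · -- lower bound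
    have hmem : x0 ∈ Finset.univ.filter fun x => f x = true := by
      simp [hfx0]
    refine le_trans ?_ (Finset.le_sup hmem)
    -- N ≤ certSize f x0
    have hne : {m | ∃ S : Finset (Fin k × Fin 2), S.card = m ∧ IsCertOn f S x0 (f x0)}.Nonempty := by
      refine ⟨N, ASsupp k i0, card_ASsupp i0, ?_⟩
      rw [hfx0]
      exact ASsupp_cert hx0sat
    obtain ⟨S, hScard, hScert⟩ := Nat.sInf_mem hne
    rw [certSize, ← hScard]
    rw [hfx0] at hScert
    have hsub : ASsupp k i0 ⊆ S := by
      intro p hp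
      by_contra hpS
      have hagree : agreesOn S x0 (flipBit x0 p) := by
        intro q hq
        have : q ≠ p := fun h => hpS (h ▸ hq)
        simp [flipBit, Function.update, this]
      have := hScert _ hagree
      obtain ⟨i, hsat⟩ : ∃ i : Fin k, PAsat (ASCert k i) (flipBit x0 p) := by
        simpa [hf, ASfun] using this
      exact no_sat_flip hk p (mem_ASsupp.mp hp) i hsat
    calc N = (ASsupp k i0).card := (card_ASsupp i0).symm
      _ ≤ S.card := Finset.card_le_card hsub
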